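/- (Example: linear demands with shifts, monotonically bad case.) Let 0 < a_1 < a_2 and c_1, c_2 ≥ 0, and let I ⊆ (0,∞) be an open interval containing [a_1/2, a_2/2] on which D_1(p) := a_1 − p + c_1/p and D_2(p) := a_2 − p + c_2/p are both positive. With (L,H) = (1,2) this is a binary monopoly model with monopoly prices a_i/2. If c_1 ≤ c_2 ≤ a_1²/4, then for every α ∈ [1/2, 1] the value function W^α is concave on [0,1]. -/

import Mathlib

open Set Filter Real

private lemma concaveOn_congr_of_eqOn {s : Set ℝ} {f g : ℝ → ℝ}
    (h : ConcaveOn ℝ s g) (hfg : ∀ x ∈ s, f x = g x) : ConcaveOn ℝ s f := by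
  refine ⟨h.1, fun x hx y hy a b ha hb hab => ?_⟩
  rw [hfg x hx, hfg y hy, hfg _ (h.1 hx hy ha hb hab)]
  exact h.2 hx hy ha hb hab

private noncomputable def auxG (a d c1 Δ K ΔK α : ℝ) : ℝ → ℝ := fun μ =>
  α * (-3 / 2 * (a + μ * d) ^ 2 - (c1 + μ * Δ) * Real.log (a + μ * d) + K + μ * ΔK)
    + (1 - α) * ((a + μ * d) ^ 2 + (c1 + μ * Δ))

private noncomputable def auxG' (a d c1 Δ K ΔK α : ℝ) : ℝ → ℝ := fun μ =>
  α * (-3 / 2 * (2 * (a + μ * d) * d) - (Δ * Real.log (a + μ * d)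
      + (c1 + μ * Δ) * (d / (a + μ * d))) + ΔK)
    + (1 - α) * (2 * (a + μ * d) * d + Δ)

private noncomputable def auxG'' (a d c1 Δ α : ℝ) : ℝ → ℝ := fun μ =>
  α * (-3 * d ^ 2 - 2 * Δ * (d / (a + μ * d))
      + (c1 + μ * Δ) * (d ^ 2 / (a + μ * d) ^ 2))
    + (1 - α) * (2 * d ^ 2)

private lemma hasDerivAt_q (a d μ : ℝ) : HasDerivAt (fun μ : ℝ => a + μ * d) d μ := by
  simpa using ((hasDerivAt_id μ).mul_const d).const_add a

private lemma hasDerivAt_C (c1 Δ μ : ℝ) : HasDerivAt (fun μ : ℝ => c1 + μ * Δ) Δ μ := by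
  simpa using ((hasDerivAt_id μ).mul_const Δ).const_add c1

private lemma hasDerivAt_q2 (a d μ : ℝ) :
    HasDerivAt (fun μ : ℝ => (a + μ * d) ^ 2) (2 * (a + μ * d) * d) μ := by
  exact ((hasDerivAt_q a d μ).pow 2).congr_deriv (by norm_num)

private lemma auxG_hasDerivAt (a d c1 Δ K ΔK α μ : ℝ) (hpos : 0 < a + μ * d) :
    HasDerivAt (auxG a d c1 Δ K ΔK α) (auxG' a d c1 Δ K ΔK α μ) μ := by
  have hlog : HasDerivAt (fun μ : ℝ => Real.log (a + μ * d)) (d / (a + μ * d)) μ :=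
    (hasDerivAt_q a d μ).log hpos.ne'
  have h1 : HasDerivAt (fun μ : ℝ => -3 / 2 * (a + μ * d) ^ 2
      - (c1 + μ * Δ) * Real.log (a + μ * d) + K + μ * ΔK)
      (-3 / 2 * (2 * (a + μ * d) * d) - (Δ * Real.log (a + μ * d)
        + (c1 + μ * Δ) * (d / (a + μ * d))) + 1 * ΔK) μ :=
    ((((hasDerivAt_q2 a d μ).const_mul (-3/2)).sub ((hasDerivAt_C c1 Δ μ).mul hlog)).add_const
      K).add ((hasDerivAt_id μ).mul_const ΔK)
  have h2 : HasDerivAt (fun μ : ℝ => (a + μ * d) ^ 2 + (c1 + μ * Δ))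
      (2 * (a + μ * d) * d + Δ) μ := (hasDerivAt_q2 a d μ).add (hasDerivAt_C c1 Δ μ)
  have h := (h1.const_mul α).add (h2.const_mul (1 - α))
  unfold auxG auxG'
  exact h.congr_deriv (by ring)

private lemma auxG'_hasDerivAt (a d c1 Δ K ΔK α μ : ℝ) (hpos : 0 < a + μ * d) :
    HasDerivAt (auxG' a d c1 Δ K ΔK α) (auxG'' a d c1 Δ α μ) μ := by
  have hlog : HasDerivAt (fun μ : ℝ => Real.log (a + μ * d)) (d / (a + μ * d)) μ :=
    (hasDerivAt_q a d μ).log hpos.ne'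
  have hinv : HasDerivAt (fun μ : ℝ => d / (a + μ * d))
      ((0 * (a + μ * d) - d * d) / (a + μ * d) ^ 2) μ :=
    (hasDerivAt_const μ d).div (hasDerivAt_q a d μ) hpos.ne'
  have ha' : HasDerivAt (fun μ : ℝ => -3 / 2 * (2 * (a + μ * d) * d))
      (-3 / 2 * (2 * d * d)) μ := by
    have := (((hasDerivAt_q a d μ).const_mul (2:ℝ)).mul_const d).const_mul (-3/2 : ℝ)
    convert this using 1 <;> ring
  have hb : HasDerivAt (fun μ : ℝ => Δ * Real.log (a + μ * d)) (Δ * (d / (a + μ * d))) μ :=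
    hlog.const_mul _
  have hc : HasDerivAt (fun μ : ℝ => (c1 + μ * Δ) * (d / (a + μ * d)))
      (Δ * (d / (a + μ * d)) + (c1 + μ * Δ) * ((0 * (a + μ * d) - d * d) / (a + μ * d) ^ 2)) μ :=
    (hasDerivAt_C c1 Δ μ).mul hinv
  have h1 := (ha'.sub (hb.add hc)).add_const ΔK
  have h2 : HasDerivAt (fun μ : ℝ => 2 * (a + μ * d) * d + Δ) (2 * d * d) μ := by
    have := (((hasDerivAt_q a d μ).const_mul (2:ℝ)).mul_const d).add_const Δ
    convert this using 1 <;> ring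
  have h := (h1.const_mul α).add (h2.const_mul (1 - α))
  unfold auxG' auxG''
  exact h.congr_deriv (by ring)

private lemma auxG_concave (a d c1 Δ K ΔK α : ℝ) (ha : 0 < a) (hd : 0 < d)
    (hc1 : 0 ≤ c1) (hΔ : 0 ≤ Δ) (hbad : c1 + Δ ≤ a ^ 2)
    (hα : 1 / 2 ≤ α) (hα1 : α ≤ 1) :
    ConcaveOn ℝ (Set.Icc (0:ℝ) 1) (auxG a d c1 Δ K ΔK α) := by
  have hqpos : ∀ μ : ℝ, 0 ≤ μ → 0 < a + μ * d := fun μ hμ => by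
    nlinarith [mul_nonneg hμ hd.le]
  apply concaveOn_of_deriv2_nonpos (convex_Icc 0 1)
  · intro μ hμ
    exact (auxG_hasDerivAt a d c1 Δ K ΔK α μ
      (hqpos μ hμ.1)).differentiableAt.continuousAt.continuousWithinAt
  · rw [interior_Icc]
    intro μ hμ
    exact (auxG_hasDerivAt a d c1 Δ K ΔK α μ (hqpos μ hμ.1.le)).differentiableAt.differentiableWithinAt
  · rw [interior_Icc]
    intro μ hμ
    have heq : deriv (auxG a d c1 Δ K ΔK α) =ᶠ[nhds μ] auxG' a d c1 Δ K ΔK α := by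
      filter_upwards [isOpen_Ioo.mem_nhds hμ] with x hx
      exact (auxG_hasDerivAt a d c1 Δ K ΔK α x (hqpos x hx.1.le)).deriv
    exact ((auxG'_hasDerivAt a d c1 Δ K ΔK α μ
      (hqpos μ hμ.1.le)).differentiableAt.congr_of_eventuallyEq heq).differentiableWithinAt
  · rw [interior_Icc]
    intro μ hμ
    have heq : deriv (auxG a d c1 Δ K ΔK α) =ᶠ[nhds μ] auxG' a d c1 Δ K ΔK α := by
      filter_upwards [isOpen_Ioo.mem_nhds hμ] with x hx
      exact (auxG_hasDerivAt a d c1 Δ K ΔK α x (hqpos x hx.1.le)).deriv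
    have h2 : deriv (deriv (auxG a d c1 Δ K ΔK α)) μ = auxG'' a d c1 Δ α μ := by
      rw [Filter.EventuallyEq.deriv_eq heq]
      exact (auxG'_hasDerivAt a d c1 Δ K ΔK α μ (hqpos μ hμ.1.le)).deriv
    have hit : deriv^[2] (auxG a d c1 Δ K ΔK α) μ
        = deriv (deriv (auxG a d c1 Δ K ΔK α)) μ := rfl
    rw [hit, h2]
    -- the inequality
    have hq0 : 0 < a + μ * d := hqpos μ hμ.1.le
    have hqa : a ≤ a + μ * d := by nlinarith [mul_nonneg hμ.1.le hd.le]
    have hqsq : c1 + μ * Δ ≤ (a + μ * d) ^ 2 := by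
      have h1 : a ^ 2 ≤ (a + μ * d) ^ 2 := by nlinarith
      have h2 : c1 + μ * Δ ≤ c1 + Δ := by nlinarith [hμ.2.le]
      linarith
    have hq2pos : 0 < (a + μ * d) ^ 2 := by positivity
    have ht1 : (c1 + μ * Δ) * (d ^ 2 / (a + μ * d) ^ 2) ≤ d ^ 2 := by
      have heq2 : (c1 + μ * Δ) * (d ^ 2 / (a + μ * d) ^ 2)
          = (c1 + μ * Δ) * d ^ 2 / (a + μ * d) ^ 2 := by ring
      rw [heq2, div_le_iff₀ hq2pos]
      nlinarith [hqsq, sq_nonneg d]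
    have ht2 : 0 ≤ 2 * Δ * (d / (a + μ * d)) := by positivity
    have hA : (0:ℝ) ≤ α := by linarith
    have e1 : α * ((c1 + μ * Δ) * (d ^ 2 / (a + μ * d) ^ 2)) ≤ α * d ^ 2 :=
      mul_le_mul_of_nonneg_left ht1 hA
    have e2 : 0 ≤ α * (2 * Δ * (d / (a + μ * d))) := mul_nonneg hA ht2
    have e3 : 0 ≤ d ^ 2 * (2 * α - 1) := mul_nonneg (sq_nonneg d) (by linarith)
    unfold auxG''
    nlinarith [e1, e2, e3]

/-- (Example: linear demands with shifts, monotonically bad case.)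
For `D_i(p) = a_i − p + c_i/p` with `0 < a_1 < a_2`, `c_1, c_2 ≥ 0` and monopoly prices
`a_i/2`: if `c_1 ≤ c_2 ≤ a_1²/4` then `W^α` is concave on `[0,1]` for every `α ∈ [1/2, 1]`. -/
theorem stmt_10
    (a1 a2 c1 c2 : ℝ) (ha1 : 0 < a1) (ha12 : a1 < a2) (hc1 : 0 ≤ c1) (hc2 : 0 ≤ c2)
    (I : Set ℝ)
    (hIopen : IsOpen I) (hIconv : Convex ℝ I) (hIpos : I ⊆ Set.Ioi (0:ℝ))
    (hIcc : Set.Icc (a1 / 2) (a2 / 2) ⊆ I)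
    (D1 D2 R1 R2 : ℝ → ℝ)
    (hD1 : D1 = fun q => a1 - q + c1 / q) (hD2 : D2 = fun q => a2 - q + c2 / q)
    (hD1pos : ∀ q ∈ I, 0 < D1 q) (hD2pos : ∀ q ∈ I, 0 < D2 q)
    (hR1 : R1 = fun q => q * D1 q) (hR2 : R2 = fun q => q * D2 q)
    (p : ℝ → ℝ)
    (hp : ∀ μ ∈ Set.Icc (0:ℝ) 1, p μ ∈ Set.Icc (a1 / 2) (a2 / 2) ∧
      (1 - μ) * deriv R1 (p μ) + μ * deriv R2 (p μ) = 0)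
    (CS1 CS2 : ℝ → ℝ)
    (hCS1 : ∀ q ∈ I, HasDerivAt CS1 (-(D1 q)) q)
    (hCS2 : ∀ q ∈ I, HasDerivAt CS2 (-(D2 q)) q)
    (W : ℝ → ℝ → ℝ)
    (hW : ∀ α : ℝ, W α = fun μ =>
      (1 - μ) * (α * CS1 (p μ) + (1 - α) * R1 (p μ)) +
        μ * (α * CS2 (p μ) + (1 - α) * R2 (p μ)))
    (hbad1 : c1 ≤ c2) (hbad2 : c2 ≤ a1 ^ 2 / 4) :
    (∀ q ∈ I, deriv (deriv R1) q = -2) ∧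
    (∀ q ∈ I, deriv (deriv R2) q = -2) ∧
    deriv R1 (a1 / 2) = 0 ∧ deriv R2 (a2 / 2) = 0 ∧
    ∀ α ∈ Set.Icc (1/2 : ℝ) 1, ConcaveOn ℝ (Set.Icc (0:ℝ) 1) (W α) := by
  -- first derivatives of the revenue functions
  have hdR1 : ∀ x : ℝ, 0 < x → deriv R1 x = a1 - 2 * x := by
    intro x hx
    have he : R1 =ᶠ[nhds x] fun y => a1 * y - y ^ 2 + c1 := by
      filter_upwards [eventually_gt_nhds hx] with y hy
      rw [hR1, hD1]
      field_simp
    rw [he.deriv_eq]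
    have h : HasDerivAt (fun y : ℝ => a1 * y - y ^ 2 + c1) (a1 - 2 * x) x := by
      have := (((hasDerivAt_id x).const_mul a1).sub (hasDerivAt_pow 2 x)).add_const c1
      exact this.congr_deriv (by norm_num)
    exact h.deriv
  have hdR2 : ∀ x : ℝ, 0 < x → deriv R2 x = a2 - 2 * x := by
    intro x hx
    have he : R2 =ᶠ[nhds x] fun y => a2 * y - y ^ 2 + c2 := by
      filter_upwards [eventually_gt_nhds hx] with y hy
      rw [hR2, hD2]
      field_simp
    rw [he.deriv_eq]
    have h : HasDerivAt (fun y : ℝ => a2 * y - y ^ 2 + c2) (a2 - 2 * x) x := by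
      have := (((hasDerivAt_id x).const_mul a2).sub (hasDerivAt_pow 2 x)).add_const c2
      exact this.congr_deriv (by norm_num)
    exact h.deriv
  have hneg2 : ∀ (a : ℝ) (x : ℝ), HasDerivAt (fun y : ℝ => a - 2 * y) (-2) x := by
    intro a x
    simpa using (((hasDerivAt_id x).const_mul (2:ℝ)).const_sub a)
  refine ⟨?_, ?_, ?_, ?_, ?_⟩
  · intro x hx
    have hxpos : (0:ℝ) < x := hIpos hx
    have he : deriv R1 =ᶠ[nhds x] fun y => a1 - 2 * y := by
      filter_upwards [eventually_gt_nhds hxpos] with y hy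
      exact hdR1 y hy
    rw [he.deriv_eq]
    exact (hneg2 a1 x).deriv
  · intro x hx
    have hxpos : (0:ℝ) < x := hIpos hx
    have he : deriv R2 =ᶠ[nhds x] fun y => a2 - 2 * y := by
      filter_upwards [eventually_gt_nhds hxpos] with y hy
      exact hdR2 y hy
    rw [he.deriv_eq]
    exact (hneg2 a2 x).deriv
  · rw [hdR1 (a1/2) (by linarith)]; ring
  · rw [hdR2 (a2/2) (by linarith)]; ring
  -- main part
  have hpf : ∀ μ ∈ Set.Icc (0:ℝ) 1, p μ = a1 / 2 + μ * ((a2 - a1) / 2) := by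
    intro μ hμ
    obtain ⟨hpm, heq⟩ := hp μ hμ
    have hppos : 0 < p μ := lt_of_lt_of_le (by linarith) hpm.1
    rw [hdR1 _ hppos, hdR2 _ hppos] at heq
    linear_combination (-1/2 : ℝ) * heq
  -- explicit form of the consumer surplus antiderivatives
  have hmemI : ∀ μ ∈ Set.Icc (0:ℝ) 1, a1 / 2 + μ * ((a2 - a1) / 2) ∈ I := by
    intro μ hμ
    apply hIcc
    constructor
    · nlinarith [mul_nonneg hμ.1 (by linarith : (0:ℝ) ≤ (a2 - a1) / 2)]
    · nlinarith [hμ.2, mul_le_of_le_one_left (by linarith : (0:ℝ) ≤ (a2 - a1) / 2) hμ.2]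
  have ha2I : a1 / 2 ∈ I := hIcc ⟨le_refl _, by linarith⟩
  have hCSf : ∀ (CS : ℝ → ℝ) (a c : ℝ), (∀ q ∈ I, HasDerivAt CS (-(a - q + c / q)) q) →
      ∀ x ∈ I, CS x = -(a * x) + x ^ 2 / 2 - c * Real.log x +
        (CS (a1/2) - (-(a * (a1/2)) + (a1/2) ^ 2 / 2 - c * Real.log (a1/2))) := by
    intro CS a c hCS x hx
    set E : ℝ → ℝ := fun y => -(a * y) + y ^ 2 / 2 - c * Real.log y with hE_def
    have hE : ∀ y ∈ I, HasDerivAt E (-(a - y + c / y)) y := by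
      intro y hy
      have hypos : 0 < y := hIpos hy
      have h := ((((hasDerivAt_id y).const_mul a).neg).add
        ((hasDerivAt_pow 2 y).div_const 2)).sub ((Real.hasDerivAt_log hypos.ne').const_mul c)
      have hne := hypos.ne'
      exact h.congr_deriv (by field_simp; ring)
    have hgd : ∀ y ∈ I, HasDerivWithinAt (fun z => CS z - E z) ((fun _ => (0:ℝ)) y) I y := by
      intro y hy
      exact ((hCS y hy).sub (hE y hy)).hasDerivWithinAt.congr_deriv (by simp)
    have hb := hIconv.norm_image_sub_le_of_norm_hasDerivWithin_le (C := 0) hgd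
      (fun y _ => by simp) ha2I hx
    have h0 : CS x - E x - (CS (a1/2) - E (a1/2)) = 0 := by
      have : ‖CS x - E x - (CS (a1/2) - E (a1/2))‖ ≤ 0 := by simpa using hb
      simpa using norm_le_zero_iff.mp this
    have hEx : E x = -(a * x) + x ^ 2 / 2 - c * Real.log x := rfl
    have hEa : E (a1/2) = -(a * (a1/2)) + (a1/2) ^ 2 / 2 - c * Real.log (a1/2) := rfl
    rw [hEx, hEa] at h0
    linarith
  have hCS1' : ∀ q ∈ I, HasDerivAt CS1 (-(a1 - q + c1 / q)) q := by
    simp only [hD1] at hCS1; exact hCS1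
  have hCS2' : ∀ q ∈ I, HasDerivAt CS2 (-(a2 - q + c2 / q)) q := by
    simp only [hD2] at hCS2; exact hCS2
  have hCS1f := hCSf CS1 a1 c1 hCS1'
  have hCS2f := hCSf CS2 a2 c2 hCS2'
  set KK1 : ℝ := CS1 (a1/2) - (-(a1 * (a1/2)) + (a1/2) ^ 2 / 2 - c1 * Real.log (a1/2)) with hKK1
  set KK2 : ℝ := CS2 (a1/2) - (-(a2 * (a1/2)) + (a1/2) ^ 2 / 2 - c2 * Real.log (a1/2)) with hKK2
  intro α hα
  rw [hW α]
  apply concaveOn_congr_of_eqOn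
    (auxG_concave (a1/2) ((a2-a1)/2) c1 (c2-c1) KK1 (KK2-KK1) α
      (by linarith) (by linarith) hc1 (by linarith) (by nlinarith) hα.1 hα.2)
  intro μ hμ
  have hpμ := hpf μ hμ
  have hmem : p μ ∈ I := by rw [hpμ]; exact hmemI μ hμ
  have hppos : 0 < p μ := hIpos hmem
  simp only [hR1, hR2, hD1, hD2]
  rw [hpμ]
  rw [hpμ] at hmem hppos
  rw [hCS1f _ hmem, hCS2f _ hmem]
  have hne : a1 / 2 + μ * ((a2 - a1) / 2) ≠ 0 := hppos.ne'
  have hx1 : ∀ a c : ℝ, (a1 / 2 + μ * ((a2 - a1) / 2)) *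
      (a - (a1 / 2 + μ * ((a2 - a1) / 2)) + c / (a1 / 2 + μ * ((a2 - a1) / 2)))
      = a * (a1 / 2 + μ * ((a2 - a1) / 2)) - (a1 / 2 + μ * ((a2 - a1) / 2)) ^ 2 + c := by
    intro a c
    have h : c / (a1 / 2 + μ * ((a2 - a1) / 2)) * (a1 / 2 + μ * ((a2 - a1) / 2)) = c :=
      div_mul_cancel₀ c hne
    linear_combination h
  rw [hx1 a1 c1, hx1 a2 c2]
  unfold auxG
  ring
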